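/- Let d ≥ 1, let α = (α₁,…,α_d) with each α_j ∈ (0,1), let u₀ ∈ C(ℝ^d) ∩ L¹(ℝ^d) be strictly positive with ∫u₀ = 1, and let T, C₁, C₂, σ₁, σ₂ > 0. Then there exist constants K, δ, ε > 0 with ε < min_j min(α_j, 1−α_j) such that for every t ∈ (0,T] and every strictly positive continuous integrable u : ℝ^d → (0,∞) with ∫u = 1 satisfying C₁ ∫ G_{σ₁}(t, x−ξ) u₀(ξ) dξ ≤ u(x) ≤ C₂ ∫ G_{σ₂}(t, x−ξ) u₀(ξ) dξ for all x ∈ ℝ^d, the following three properties hold: (a) u(x) ≥ δ whenever max_j |x_j| ≤ 2K; (b) |Q_α^j(u)| ≤ K for every j = 1,…,d; (c) ∫_{{x : max_j |x_j| ≥ K}} u(x) dx ≤ ε. -/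

import Mathlib

open MeasureTheory Real Set

/-- The heat kernel of the standard heat equation in `ℝ^d` with diffusion coefficient `σ`:
`G_σ(t,x) = (2π t σ²)^{-d/2} exp(-|x|²/(2tσ²))`. -/
noncomputable def heatKernel (d : ℕ) (σ t : ℝ) (x : EuclideanSpace ℝ (Fin d)) : ℝ :=
  (2 * π * t * σ ^ 2) ^ (-(d : ℝ) / 2) * Real.exp (-‖x‖ ^ 2 / (2 * t * σ ^ 2))

open Filter Topology
open scoped ENNReal

section Helpers
variable {d : ℕ} {σ t T : ℝ}
local notation "E" => EuclideanSpace ℝ (Fin d)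

lemma heatKernel_pos (ht : 0 < t) (hσ : 0 < σ) (x : E) : 0 < heatKernel d σ t x := by
  unfold heatKernel; positivity

lemma heatKernel_nonneg (ht : 0 < t) (hσ : 0 < σ) (x : E) : 0 ≤ heatKernel d σ t x :=
  (heatKernel_pos ht hσ x).le

lemma heatKernel_continuous (d : ℕ) (σ t : ℝ) : Continuous (heatKernel d σ t) :=
  continuous_const.mul (Real.continuous_exp.comp
    (((continuous_norm.pow 2).neg).div_const _))

lemma heatKernel_eq (ht : 0 < t) (hσ : 0 < σ) :
    heatKernel d σ t = fun x : E =>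
      (2 * π * t * σ ^ 2) ^ (-(d : ℝ) / 2) * rexp (-((2 * t * σ ^ 2)⁻¹) * ‖x‖ ^ 2) := by
  funext x
  unfold heatKernel
  congr 1
  ring_nf

lemma gauss_integrable {b : ℝ} (hb : 0 < b) :
    Integrable fun v : E => rexp (-b * ‖v‖ ^ 2) := by
  have h := (GaussianFourier.integrable_cexp_neg_mul_sq_norm_add (V := E)
    (b := (b : ℂ)) (by simpa using hb) 0 (0 : E)).norm
  convert h using 2 with v
  simp only [Complex.norm_exp]
  norm_num
  left
  norm_cast

lemma gauss_integral {b : ℝ} (hb : 0 < b) :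
    ∫ v : E, rexp (-b * ‖v‖ ^ 2) = (π / b) ^ ((d : ℝ) / 2) := by
  rw [GaussianFourier.integral_rexp_neg_mul_sq_norm hb, finrank_euclideanSpace_fin]

lemma heatKernel_integrable (ht : 0 < t) (hσ : 0 < σ) :
    Integrable (heatKernel d σ t) := by
  rw [heatKernel_eq ht hσ]
  exact (gauss_integrable (by positivity)).const_mul _

lemma heatKernel_integral (ht : 0 < t) (hσ : 0 < σ) :
    ∫ x : E, heatKernel d σ t x = 1 := by
  rw [heatKernel_eq ht hσ]
  rw [integral_const_mul, gauss_integral (by positivity)]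
  have h1 : π / (2 * t * σ ^ 2)⁻¹ = 2 * π * t * σ ^ 2 := by
    field_simp
  rw [h1, neg_div, Real.rpow_neg (by positivity)]
  rw [inv_mul_cancel₀ (Real.rpow_pos_of_pos (by positivity) _).ne']

lemma heatKernel_le (ht : 0 < t) (hσ : 0 < σ) (x : E) :
    heatKernel d σ t x ≤ (2 * π * t * σ ^ 2) ^ (-(d : ℝ) / 2) := by
  unfold heatKernel
  have h1 : rexp (-‖x‖ ^ 2 / (2 * t * σ ^ 2)) ≤ 1 := by
    rw [Real.exp_le_one_iff]
    apply div_nonpos_of_nonpos_of_nonneg (neg_nonpos.2 (by positivity)) (by positivity)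
  calc (2 * π * t * σ ^ 2) ^ (-(d : ℝ) / 2) * rexp (-‖x‖ ^ 2 / (2 * t * σ ^ 2))
      ≤ (2 * π * t * σ ^ 2) ^ (-(d : ℝ) / 2) * 1 := by
        apply mul_le_mul_of_nonneg_left h1 (by positivity)
    _ = _ := mul_one _

lemma heatKernel_tail (ht : 0 < t) (htT : t ≤ T) (hσ : 0 < σ) {r : ℝ} (hr : 0 ≤ r) :
    ∫ x in {x : E | r ≤ ‖x‖}, heatKernel d σ t x
      ≤ 2 ^ ((d : ℝ) / 2) * rexp (-r ^ 2 / (4 * T * σ ^ 2)) := by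
  have hT : 0 < T := lt_of_lt_of_le ht htT
  set c : ℝ := (2 * π * t * σ ^ 2) ^ (-(d : ℝ) / 2) with hc
  set g : E → ℝ := fun x => rexp (-r ^ 2 / (4 * t * σ ^ 2)) * (c * rexp (-((4 * t * σ ^ 2)⁻¹) * ‖x‖ ^ 2)) with hg
  have hgint : Integrable g := ((gauss_integrable (by positivity)).const_mul c).const_mul _
  have hSmeas : MeasurableSet {x : E | r ≤ ‖x‖} :=
    (isClosed_le continuous_const continuous_norm).measurableSet
  have hpt : ∀ x ∈ {x : E | r ≤ ‖x‖}, heatKernel d σ t x ≤ g x := by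
    intro x hx
    simp only [mem_setOf_eq] at hx
    unfold heatKernel
    rw [hg]
    have hxx : r ^ 2 ≤ ‖x‖ ^ 2 := by
      apply pow_le_pow_left₀ hr hx
    have harg : -‖x‖ ^ 2 / (2 * t * σ ^ 2) ≤
        -r ^ 2 / (4 * t * σ ^ 2) + -((4 * t * σ ^ 2)⁻¹) * ‖x‖ ^ 2 := by
      have e1 : -‖x‖ ^ 2 / (2 * t * σ ^ 2) = (-2 * ‖x‖ ^ 2) / (4 * t * σ ^ 2) := by ring
      have e2 : -r ^ 2 / (4 * t * σ ^ 2) + -((4 * t * σ ^ 2)⁻¹) * ‖x‖ ^ 2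
          = (-r ^ 2 - ‖x‖ ^ 2) / (4 * t * σ ^ 2) := by ring
      rw [e1, e2]
      apply div_le_div_of_nonneg_right ?_ (by positivity)
      linarith
    calc c * rexp (-‖x‖ ^ 2 / (2 * t * σ ^ 2))
        ≤ c * rexp (-r ^ 2 / (4 * t * σ ^ 2) + -((4 * t * σ ^ 2)⁻¹) * ‖x‖ ^ 2) := by
          apply mul_le_mul_of_nonneg_left (Real.exp_le_exp.2 harg) (by positivity)
      _ = _ := by rw [Real.exp_add]; ring
  calc ∫ x in {x : E | r ≤ ‖x‖}, heatKernel d σ t x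
      ≤ ∫ x in {x : E | r ≤ ‖x‖}, g x :=
        setIntegral_mono_on ((heatKernel_integrable ht hσ).integrableOn)
          hgint.integrableOn hSmeas hpt
    _ ≤ ∫ x, g x := setIntegral_le_integral hgint
        (Filter.Eventually.of_forall fun x => by positivity)
    _ = rexp (-r ^ 2 / (4 * t * σ ^ 2)) * (c * (π / (4 * t * σ ^ 2)⁻¹) ^ ((d : ℝ) / 2)) := by
        rw [hg]; rw [integral_const_mul, integral_const_mul, gauss_integral (by positivity)]
    _ = rexp (-r ^ 2 / (4 * t * σ ^ 2)) * 2 ^ ((d : ℝ) / 2) := by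
        congr 1
        have h4 : π / (4 * t * σ ^ 2)⁻¹ = 4 * π * t * σ ^ 2 := by field_simp
        rw [hc, h4, neg_div, Real.rpow_neg (by positivity), inv_mul_eq_div,
          ← Real.div_rpow (by positivity) (by positivity)]
        congr 1
        field_simp
        ring
    _ ≤ rexp (-r ^ 2 / (4 * T * σ ^ 2)) * 2 ^ ((d : ℝ) / 2) := by
        apply mul_le_mul_of_nonneg_right _ (by positivity)
        apply Real.exp_le_exp.2
        rw [neg_div, neg_div, neg_le_neg_iff]
        apply div_le_div_of_nonneg_left (by positivity) (by positivity)
        nlinarith [sq_nonneg σ, hσ.le]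
    _ = _ := mul_comm _ _


lemma heatKernel_ball (ht : 0 < t) (htT : t ≤ T) (hσ : 0 < σ) {r : ℝ} (hr : 0 ≤ r)
    (hhalf : 2 ^ ((d : ℝ) / 2) * rexp (-r ^ 2 / (4 * T * σ ^ 2)) ≤ 1 / 2) :
    (1 : ℝ) / 2 ≤ ∫ x in Metric.closedBall (0 : E) r, heatKernel d σ t x := by
  have hint := heatKernel_integrable (d := d) ht hσ
  have hsplit := integral_add_compl (measurableSet_closedBall
    (x := (0 : E)) (ε := r)) hint
  rw [heatKernel_integral ht hσ] at hsplit
  have htail : ∫ x in (Metric.closedBall (0 : E) r)ᶜ, heatKernel d σ t x ≤ 1 / 2 := by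
    calc ∫ x in (Metric.closedBall (0 : E) r)ᶜ, heatKernel d σ t x
        ≤ ∫ x in {x : E | r ≤ ‖x‖}, heatKernel d σ t x := by
          apply setIntegral_mono_set (hint.integrableOn)
            (Filter.Eventually.of_forall fun x => heatKernel_nonneg ht hσ x)
          apply HasSubset.Subset.eventuallyLE
          intro x hx
          have hx' : ¬ ‖x‖ ≤ r := by
            simpa [Metric.mem_closedBall, dist_zero_right] using hx
          exact le_of_lt (not_le.1 hx')
      _ ≤ 2 ^ ((d : ℝ) / 2) * rexp (-r ^ 2 / (4 * T * σ ^ 2)) := heatKernel_tail ht htT hσ hr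
      _ ≤ 1 / 2 := hhalf
  linarith

lemma setIntegral_sub_left {s : Set E} (hs : MeasurableSet s) (f : E → ℝ) (x : E) :
    ∫ ξ in {ξ : E | x - ξ ∈ s}, f (x - ξ) = ∫ y in s, f y := by
  have hpre : MeasurableSet {ξ : E | x - ξ ∈ s} :=
    (continuous_const.sub continuous_id).measurable hs
  rw [← integral_indicator hs, ← integral_indicator hpre]
  have hind : ∀ ξ : E, {ξ : E | x - ξ ∈ s}.indicator (fun ξ => f (x - ξ)) ξ
      = s.indicator f (x - ξ) := by
    intro ξ
    by_cases h : x - ξ ∈ s <;> simp [indicator, h]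
  rw [funext hind]
  exact integral_sub_left_eq_self (s.indicator f) volume x

lemma setIntegral_sub_right {s : Set E} (hs : MeasurableSet s) (f : E → ℝ) (ξ : E) :
    ∫ x in {x : E | x - ξ ∈ s}, f (x - ξ) = ∫ y in s, f y := by
  have hpre : MeasurableSet {x : E | x - ξ ∈ s} :=
    (continuous_id.sub continuous_const).measurable hs
  rw [← integral_indicator hs, ← integral_indicator hpre]
  have hind : ∀ x : E, {x : E | x - ξ ∈ s}.indicator (fun x => f (x - ξ)) x
      = s.indicator f (x - ξ) := by
    intro x
    by_cases h : x - ξ ∈ s <;> simp [indicator, h]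
  rw [funext hind]
  exact integral_sub_right_eq_self (s.indicator f) ξ

lemma abs_coord_le_norm (x : E) (j : Fin d) : |x j| ≤ ‖x‖ := by
  rw [EuclideanSpace.norm_eq]
  rw [← Real.sqrt_sq_eq_abs]
  apply Real.sqrt_le_sqrt
  have : |x j| ^ 2 ≤ ∑ i, ‖x i‖ ^ 2 := by
    have := Finset.single_le_sum (f := fun i => ‖x i‖ ^ 2)
      (fun i _ => by positivity) (Finset.mem_univ j)
    simpa [Real.norm_eq_abs, sq_abs] using this
  simpa [sq_abs] using this

lemma norm_le_of_coords (x : E) {K : ℝ} (hK : 0 ≤ K) (h : ∀ j, |x j| ≤ K) :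
    ‖x‖ ≤ Real.sqrt d * K := by
  rw [EuclideanSpace.norm_eq]
  have hsum : ∑ i, ‖x i‖ ^ 2 ≤ (d : ℝ) * K ^ 2 := by
    calc ∑ i, ‖x i‖ ^ 2 ≤ ∑ _i : Fin d, K ^ 2 := by
          apply Finset.sum_le_sum
          intro i _
          rw [Real.norm_eq_abs]
          apply pow_le_pow_left₀ (abs_nonneg _) (h i)
      _ = (d : ℝ) * K ^ 2 := by simp [mul_comm]
  calc Real.sqrt (∑ i, ‖x i‖ ^ 2) ≤ Real.sqrt ((d : ℝ) * K ^ 2) := Real.sqrt_le_sqrt hsum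
    _ = Real.sqrt d * K := by
        rw [Real.sqrt_mul (Nat.cast_nonneg d), Real.sqrt_sq hK]

lemma conv_integrand_integrable {u₀ : E → ℝ} (hu₀_cont : Continuous u₀)
    (hu₀_pos : ∀ x, 0 < u₀ x) (hu₀_int : Integrable u₀)
    (ht : 0 < t) (hσ : 0 < σ) (x : E) :
    Integrable fun ξ : E => heatKernel d σ t (x - ξ) * u₀ ξ := by
  apply Integrable.mono (hu₀_int.const_mul ((2 * π * t * σ ^ 2) ^ (-(d : ℝ) / 2)))
  · exact (((heatKernel_continuous d σ t).comp
      (continuous_const.sub continuous_id)).mul hu₀_cont).aestronglyMeasurable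
  · apply Filter.Eventually.of_forall
    intro ξ
    rw [Real.norm_eq_abs, Real.norm_eq_abs,
      abs_of_nonneg (mul_nonneg (Real.rpow_nonneg (by positivity) _) (hu₀_pos ξ).le),
      abs_of_nonneg (mul_nonneg (heatKernel_nonneg ht hσ _) (hu₀_pos ξ).le)]
    exact mul_le_mul_of_nonneg_right (heatKernel_le ht hσ _) (hu₀_pos ξ).le

end Helpers

/-- Localization of the quantile vector for probability densities sandwiched
between two Gaussian convolutions of a fixed strictly positive continuous integrable initial
density `u₀`: there are `K, δ, ε > 0` with `ε < min_j min(α_j, 1-α_j)` such that any such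
density `u` at time `t ∈ (0,T]` satisfies (a) `u ≥ δ` on the cube `{max_j |x_j| ≤ 2K}`,
(b) every coordinate of its quantile vector is bounded by `K`, and (c) the mass of `u` on
`{max_j |x_j| ≥ K}` is at most `ε`. -/
theorem quantile_localization_fixed_initial_density
    (d : ℕ) (hd : 1 ≤ d)
    (α : Fin d → ℝ) (hα : ∀ j, α j ∈ Ioo (0 : ℝ) 1)
    (u₀ : EuclideanSpace ℝ (Fin d) → ℝ)
    (hu₀_cont : Continuous u₀) (hu₀_pos : ∀ x, 0 < u₀ x)
    (hu₀_int : Integrable u₀) (hu₀_mass : ∫ x, u₀ x = 1)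
    (T C₁ C₂ σ₁ σ₂ : ℝ) (hT : 0 < T) (hC₁ : 0 < C₁) (hC₂ : 0 < C₂)
    (hσ₁ : 0 < σ₁) (hσ₂ : 0 < σ₂) :
    ∃ K δ ε : ℝ, 0 < K ∧ 0 < δ ∧ 0 < ε ∧ (∀ j, ε < min (α j) (1 - α j)) ∧
      ∀ t ∈ Ioc (0 : ℝ) T, ∀ u : EuclideanSpace ℝ (Fin d) → ℝ,
        Continuous u → (∀ x, 0 < u x) → Integrable u → (∫ x, u x) = 1 →
        (∀ x, C₁ * ∫ ξ, heatKernel d σ₁ t (x - ξ) * u₀ ξ ≤ u x) →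
        (∀ x, u x ≤ C₂ * ∫ ξ, heatKernel d σ₂ t (x - ξ) * u₀ ξ) →
        ((∀ x : EuclideanSpace ℝ (Fin d), (∀ j, |x j| ≤ 2 * K) → δ ≤ u x) ∧
          (∀ q : Fin d → ℝ,
            (∀ j, ∫ x in {x : EuclideanSpace ℝ (Fin d) | x j ≤ q j}, u x = α j) →
            ∀ j, |q j| ≤ K) ∧
          ∫ x in {x : EuclideanSpace ℝ (Fin d) | ∃ j, K ≤ |x j|}, u x ≤ ε) := by
    classical
  have hFin : Nonempty (Fin d) := ⟨⟨0, hd⟩⟩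
  set m₀ : ℝ := Finset.univ.inf' Finset.univ_nonempty (fun j => min (α j) (1 - α j))
    with hm₀def
  have hm₀pos : 0 < m₀ := by
    rw [hm₀def, Finset.lt_inf'_iff]
    intro j _
    exact lt_min (hα j).1 (by linarith [(hα j).2])
  set ε : ℝ := m₀ / 2 with hεdef
  have hεpos : 0 < ε := by positivity
  have hεlt : ∀ j, ε < min (α j) (1 - α j) := fun j =>
    lt_of_lt_of_le (by rw [hεdef]; linarith : ε < m₀) (Finset.inf'_le _ (Finset.mem_univ j))
  -- generic decay of the Gaussian tail bound
  have hdecay : ∀ σ : ℝ, 0 < σ →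
      Tendsto (fun r : ℝ => 2 ^ ((d : ℝ) / 2) * rexp (-r ^ 2 / (4 * T * σ ^ 2)))
        atTop (𝓝 0) := by
    intro σ hσ
    have h1 : Tendsto (fun r : ℝ => r ^ 2 / (4 * T * σ ^ 2)) atTop atTop :=
      (tendsto_pow_atTop two_ne_zero).atTop_div_const (by positivity)
    have h2 : Tendsto (fun r : ℝ => rexp (-(r ^ 2 / (4 * T * σ ^ 2)))) atTop (𝓝 0) :=
      tendsto_exp_neg_atTop_nhds_zero.comp h1
    have h3 := h2.const_mul (2 ^ ((d : ℝ) / 2))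
    simpa [neg_div] using h3
  -- choose r for σ₁
  obtain ⟨r, hrhalf, hr0⟩ := (((hdecay σ₁ hσ₁).eventually_lt_const
    (by norm_num : (0 : ℝ) < 1 / 2)).and (eventually_ge_atTop (0 : ℝ))).exists
  -- tail of u₀ tends to 0
  have hball_tendsto : Tendsto
      (fun n : ℕ => ∫ ξ in Metric.closedBall (0 : EuclideanSpace ℝ (Fin d)) n, u₀ ξ)
      atTop (𝓝 1) := by
    have h := MeasureTheory.tendsto_setIntegral_of_monotone
      (s := fun n : ℕ => Metric.closedBall (0 : EuclideanSpace ℝ (Fin d)) n)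
      (f := u₀) (μ := volume) (fun n => measurableSet_closedBall)
      (fun a b hab => Metric.closedBall_subset_closedBall (by exact_mod_cast hab))
      hu₀_int.integrableOn
    have hU : (⋃ n : ℕ, Metric.closedBall (0 : EuclideanSpace ℝ (Fin d)) (n : ℝ)) = univ := by
      ext x
      simp only [mem_iUnion, Metric.mem_closedBall, mem_univ, iff_true]
      obtain ⟨n, hn⟩ := exists_nat_ge (dist x 0)
      exact ⟨n, hn⟩
    rw [hU, setIntegral_univ, hu₀_mass] at h
    exact h
  have htail0 : Tendsto
      (fun n : ℕ => ∫ ξ in (Metric.closedBall (0 : EuclideanSpace ℝ (Fin d)) n)ᶜ, u₀ ξ)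
      atTop (𝓝 0) := by
    have heq : (fun n : ℕ => ∫ ξ in (Metric.closedBall (0 : EuclideanSpace ℝ (Fin d)) n)ᶜ, u₀ ξ)
        = fun n : ℕ => 1 - ∫ ξ in Metric.closedBall (0 : EuclideanSpace ℝ (Fin d)) n, u₀ ξ := by
      funext n
      have hsp := integral_add_compl
        (measurableSet_closedBall (x := (0 : EuclideanSpace ℝ (Fin d))) (ε := (n : ℝ))) hu₀_int
      rw [hu₀_mass] at hsp
      linarith
    rw [heq]
    simpa using (tendsto_const_nhds (x := (1:ℝ)) (f := atTop)).sub hball_tendsto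
  have hexp0 : Tendsto
      (fun n : ℕ => 2 ^ ((d : ℝ) / 2) * rexp (-(n : ℝ) ^ 2 / (4 * T * σ₂ ^ 2)))
      atTop (𝓝 0) := (hdecay σ₂ hσ₂).comp tendsto_natCast_atTop_atTop
  have hcomb : Tendsto
      (fun n : ℕ => C₂ * (2 ^ ((d : ℝ) / 2) * rexp (-(n : ℝ) ^ 2 / (4 * T * σ₂ ^ 2))
        + ∫ ξ in (Metric.closedBall (0 : EuclideanSpace ℝ (Fin d)) n)ᶜ, u₀ ξ))
      atTop (𝓝 0) := by
    simpa using (hexp0.add htail0).const_mul C₂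
  obtain ⟨n, hn, hn1⟩ := ((hcomb.eventually_lt_const hεpos).and (eventually_ge_atTop 1)).exists
  have hnpos : (0 : ℝ) < n := by exact_mod_cast hn1
  set K : ℝ := 2 * (n : ℝ) with hKdef
  have hK0 : 0 < K := by rw [hKdef]; positivity
  set M : ℝ := Real.sqrt d * (2 * K) with hMdef
  have hM0 : 0 ≤ M := by
    rw [hMdef]; positivity
  set R : ℝ := M + r with hRdef
  have hR0 : 0 ≤ R := by rw [hRdef]; linarith
  obtain ⟨z, hz, hzmin⟩ := (isCompact_closedBall (0 : EuclideanSpace ℝ (Fin d)) R).exists_isMinOn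
    ⟨0, Metric.mem_closedBall_self hR0⟩ hu₀_cont.continuousOn
  set δ : ℝ := C₁ * (u₀ z * (1 / 2)) with hδdef
  have hδ0 : 0 < δ := by
    rw [hδdef]
    exact mul_pos hC₁ (mul_pos (hu₀_pos z) one_half_pos)
  refine ⟨K, δ, ε, hK0, hδ0, hεpos, hεlt, ?_⟩
  rintro t ⟨ht0, htT⟩ u hu_cont hu_pos hu_int hu_mass hlow hup
  -- the tail set
  set S : Set (EuclideanSpace ℝ (Fin d)) := {x | ∃ j, K ≤ |x j|} with hSdef
  have hSmeas : MeasurableSet S := by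
    have : S = ⋃ j, {x : EuclideanSpace ℝ (Fin d) | K ≤ |x j|} := by
      ext x; simp [hSdef, mem_iUnion]
    rw [this]
    exact MeasurableSet.iUnion fun j =>
      (isClosed_le continuous_const ((EuclideanSpace.proj j).continuous.abs)).measurableSet
  -- Part (c)
  have hconv_int : ∀ x : EuclideanSpace ℝ (Fin d),
      Integrable fun ξ => heatKernel d σ₂ t (x - ξ) * u₀ ξ :=
    fun x => conv_integrand_integrable hu₀_cont hu₀_pos hu₀_int ht0 hσ₂ x
  set A : ℝ := 2 ^ ((d : ℝ) / 2) * rexp (-(n : ℝ) ^ 2 / (4 * T * σ₂ ^ 2)) with hAdef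
  have hA0 : 0 ≤ A := by rw [hAdef]; positivity
  set tailn : ℝ := ∫ ξ in (Metric.closedBall (0 : EuclideanSpace ℝ (Fin d)) n)ᶜ, u₀ ξ
    with htailndef
  have htailn0 : 0 ≤ tailn := setIntegral_nonneg measurableSet_closedBall.compl
    (fun ξ _ => (hu₀_pos ξ).le)
  have hker_int : ∀ ξ : EuclideanSpace ℝ (Fin d),
      Integrable fun x => heatKernel d σ₂ t (x - ξ) :=
    fun ξ => (heatKernel_integrable ht0 hσ₂).comp_sub_right ξ
  have key1 : ∀ ξ : EuclideanSpace ℝ (Fin d),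
      ∫⁻ x in S, ENNReal.ofReal (heatKernel d σ₂ t (x - ξ)) ≤ 1 := by
    intro ξ
    calc ∫⁻ x in S, ENNReal.ofReal (heatKernel d σ₂ t (x - ξ))
        ≤ ∫⁻ x, ENNReal.ofReal (heatKernel d σ₂ t (x - ξ)) := setLIntegral_le_lintegral _ _
      _ = ENNReal.ofReal (∫ x, heatKernel d σ₂ t (x - ξ)) :=
          (ofReal_integral_eq_lintegral_ofReal (hker_int ξ)
            (Filter.Eventually.of_forall fun x => heatKernel_nonneg ht0 hσ₂ _)).symm
      _ = 1 := by
          rw [integral_sub_right_eq_self (heatKernel d σ₂ t) ξ, heatKernel_integral ht0 hσ₂,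
            ENNReal.ofReal_one]
  have key2 : ∀ ξ : EuclideanSpace ℝ (Fin d), ‖ξ‖ ≤ (n : ℝ) →
      ∫⁻ x in S, ENNReal.ofReal (heatKernel d σ₂ t (x - ξ)) ≤ ENNReal.ofReal A := by
    intro ξ hξ
    have hmeas' : MeasurableSet {y : EuclideanSpace ℝ (Fin d) | (n : ℝ) ≤ ‖y‖} :=
      (isClosed_le continuous_const continuous_norm).measurableSet
    have hsub : S ⊆ {x : EuclideanSpace ℝ (Fin d) |
        x - ξ ∈ {y : EuclideanSpace ℝ (Fin d) | (n : ℝ) ≤ ‖y‖}} := by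
      intro x hx
      obtain ⟨j, hj⟩ := hx
      simp only [mem_setOf_eq]
      have h1 : |ξ j| ≤ (n : ℝ) := le_trans (abs_coord_le_norm ξ j) hξ
      have h2 : (n : ℝ) ≤ |x j - ξ j| := by
        have h3 : |x j| - |ξ j| ≤ |x j - ξ j| := abs_sub_abs_le_abs_sub _ _
        have h4 : K ≤ |x j| := hj
        rw [hKdef] at h4
        linarith
      calc (n : ℝ) ≤ |x j - ξ j| := h2
        _ = |(x - ξ) j| := by simp
        _ ≤ ‖x - ξ‖ := abs_coord_le_norm _ j
    calc ∫⁻ x in S, ENNReal.ofReal (heatKernel d σ₂ t (x - ξ))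
        ≤ ∫⁻ x in {x : EuclideanSpace ℝ (Fin d) |
            x - ξ ∈ {y : EuclideanSpace ℝ (Fin d) | (n : ℝ) ≤ ‖y‖}},
            ENNReal.ofReal (heatKernel d σ₂ t (x - ξ)) := lintegral_mono_set hsub
      _ = ENNReal.ofReal (∫ x in {x : EuclideanSpace ℝ (Fin d) |
            x - ξ ∈ {y : EuclideanSpace ℝ (Fin d) | (n : ℝ) ≤ ‖y‖}},
            heatKernel d σ₂ t (x - ξ)) :=
          (ofReal_integral_eq_lintegral_ofReal (hker_int ξ).integrableOn
            (Filter.Eventually.of_forall fun x => heatKernel_nonneg ht0 hσ₂ _)).symm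
      _ = ENNReal.ofReal (∫ y in {y : EuclideanSpace ℝ (Fin d) | (n : ℝ) ≤ ‖y‖},
            heatKernel d σ₂ t y) := by rw [setIntegral_sub_right hmeas']
      _ ≤ ENNReal.ofReal A := by
          rw [hAdef]
          exact ENNReal.ofReal_le_ofReal (heatKernel_tail ht0 htT hσ₂ (Nat.cast_nonneg n))
  have hL : ∫⁻ x in S, ENNReal.ofReal (u x) ≤ ENNReal.ofReal ε := by
    have hmeasG : Measurable fun p : EuclideanSpace ℝ (Fin d) × EuclideanSpace ℝ (Fin d) =>
        ENNReal.ofReal (heatKernel d σ₂ t (p.1 - p.2) * u₀ p.2) :=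
      (ENNReal.continuous_ofReal.comp
        (((heatKernel_continuous d σ₂ t).comp (continuous_fst.sub continuous_snd)).mul
          (hu₀_cont.comp continuous_snd))).measurable
    have hIξ : ∀ ξ : EuclideanSpace ℝ (Fin d),
        ∫⁻ x in S, ENNReal.ofReal (heatKernel d σ₂ t (x - ξ) * u₀ ξ)
          = (∫⁻ x in S, ENNReal.ofReal (heatKernel d σ₂ t (x - ξ))) * ENNReal.ofReal (u₀ ξ) := by
      intro ξ
      have : ∀ x, ENNReal.ofReal (heatKernel d σ₂ t (x - ξ) * u₀ ξ)
          = ENNReal.ofReal (heatKernel d σ₂ t (x - ξ)) * ENNReal.ofReal (u₀ ξ) :=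
        fun x => ENNReal.ofReal_mul (heatKernel_nonneg ht0 hσ₂ _)
      simp_rw [this]
      exact lintegral_mul_const _ ((ENNReal.continuous_ofReal.comp
        ((heatKernel_continuous d σ₂ t).comp (continuous_id.sub continuous_const))).measurable)
    calc ∫⁻ x in S, ENNReal.ofReal (u x)
        ≤ ∫⁻ x in S, ENNReal.ofReal C₂
            * ∫⁻ ξ, ENNReal.ofReal (heatKernel d σ₂ t (x - ξ) * u₀ ξ) := by
          apply lintegral_mono
          intro x
          calc ENNReal.ofReal (u x)
              ≤ ENNReal.ofReal (C₂ * ∫ ξ, heatKernel d σ₂ t (x - ξ) * u₀ ξ) :=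
                ENNReal.ofReal_le_ofReal (hup x)
            _ = ENNReal.ofReal C₂
                * ENNReal.ofReal (∫ ξ, heatKernel d σ₂ t (x - ξ) * u₀ ξ) :=
                ENNReal.ofReal_mul hC₂.le
            _ = ENNReal.ofReal C₂ * ∫⁻ ξ, ENNReal.ofReal (heatKernel d σ₂ t (x - ξ) * u₀ ξ) := by
                rw [ofReal_integral_eq_lintegral_ofReal (hconv_int x)
                  (Filter.Eventually.of_forall fun ξ =>
                    mul_nonneg (heatKernel_nonneg ht0 hσ₂ _) (hu₀_pos ξ).le)]
      _ = ENNReal.ofReal C₂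
          * ∫⁻ x in S, ∫⁻ ξ, ENNReal.ofReal (heatKernel d σ₂ t (x - ξ) * u₀ ξ) :=
          lintegral_const_mul' _ _ ENNReal.ofReal_ne_top
      _ = ENNReal.ofReal C₂
          * ∫⁻ ξ, ∫⁻ x in S, ENNReal.ofReal (heatKernel d σ₂ t (x - ξ) * u₀ ξ) := by
          rw [lintegral_lintegral_swap (hmeasG.aemeasurable)]
      _ ≤ ENNReal.ofReal C₂ * (ENNReal.ofReal A + ENNReal.ofReal tailn) := by
          apply mul_le_mul_right
          calc ∫⁻ ξ, ∫⁻ x in S, ENNReal.ofReal (heatKernel d σ₂ t (x - ξ) * u₀ ξ)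
              = (∫⁻ ξ in Metric.closedBall (0 : EuclideanSpace ℝ (Fin d)) n,
                  ∫⁻ x in S, ENNReal.ofReal (heatKernel d σ₂ t (x - ξ) * u₀ ξ))
                + ∫⁻ ξ in (Metric.closedBall (0 : EuclideanSpace ℝ (Fin d)) n)ᶜ,
                  ∫⁻ x in S, ENNReal.ofReal (heatKernel d σ₂ t (x - ξ) * u₀ ξ) :=
                (lintegral_add_compl _ measurableSet_closedBall).symm
            _ ≤ ENNReal.ofReal A + ENNReal.ofReal tailn := by
                apply add_le_add
                · calc ∫⁻ ξ in Metric.closedBall (0 : EuclideanSpace ℝ (Fin d)) n,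
                      ∫⁻ x in S, ENNReal.ofReal (heatKernel d σ₂ t (x - ξ) * u₀ ξ)
                      ≤ ∫⁻ ξ in Metric.closedBall (0 : EuclideanSpace ℝ (Fin d)) n,
                          ENNReal.ofReal A * ENNReal.ofReal (u₀ ξ) := by
                        apply setLIntegral_mono
                          ((ENNReal.continuous_ofReal.measurable.comp
                            hu₀_cont.measurable).const_mul (ENNReal.ofReal A))
                        intro ξ hξ
                        rw [hIξ ξ]
                        apply mul_le_mul_left
                        apply key2
                        simpa [Metric.mem_closedBall, dist_zero_right] using hξ
                    _ = ENNReal.ofReal A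
                        * ∫⁻ ξ in Metric.closedBall (0 : EuclideanSpace ℝ (Fin d)) n,
                            ENNReal.ofReal (u₀ ξ) :=
                        lintegral_const_mul' _ _ ENNReal.ofReal_ne_top
                    _ ≤ ENNReal.ofReal A * 1 := by
                        apply mul_le_mul_right
                        calc ∫⁻ ξ in Metric.closedBall (0 : EuclideanSpace ℝ (Fin d)) n,
                            ENNReal.ofReal (u₀ ξ)
                            ≤ ∫⁻ ξ, ENNReal.ofReal (u₀ ξ) := setLIntegral_le_lintegral _ _
                          _ = ENNReal.ofReal (∫ ξ, u₀ ξ) :=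
                              (ofReal_integral_eq_lintegral_ofReal hu₀_int
                                (Filter.Eventually.of_forall fun ξ => (hu₀_pos ξ).le)).symm
                          _ = 1 := by rw [hu₀_mass, ENNReal.ofReal_one]
                    _ = ENNReal.ofReal A := mul_one _
                · calc ∫⁻ ξ in (Metric.closedBall (0 : EuclideanSpace ℝ (Fin d)) n)ᶜ,
                      ∫⁻ x in S, ENNReal.ofReal (heatKernel d σ₂ t (x - ξ) * u₀ ξ)
                      ≤ ∫⁻ ξ in (Metric.closedBall (0 : EuclideanSpace ℝ (Fin d)) n)ᶜ,
                          ENNReal.ofReal (u₀ ξ) := by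
                        apply setLIntegral_mono
                          (ENNReal.continuous_ofReal.measurable.comp hu₀_cont.measurable)
                        intro ξ _
                        rw [hIξ ξ]
                        calc (∫⁻ x in S, ENNReal.ofReal (heatKernel d σ₂ t (x - ξ)))
                              * ENNReal.ofReal (u₀ ξ)
                            ≤ 1 * ENNReal.ofReal (u₀ ξ) := mul_le_mul_left (key1 ξ) _
                          _ = ENNReal.ofReal (u₀ ξ) := one_mul _
                    _ = ENNReal.ofReal tailn := by
                        rw [htailndef]
                        exact (ofReal_integral_eq_lintegral_ofReal hu₀_int.integrableOn
                          (Filter.Eventually.of_forall fun ξ => (hu₀_pos ξ).le)).symm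
      _ = ENNReal.ofReal (C₂ * (A + tailn)) := by
          rw [ENNReal.ofReal_mul hC₂.le, ENNReal.ofReal_add hA0 htailn0]
      _ ≤ ENNReal.ofReal ε := ENNReal.ofReal_le_ofReal hn.le
  have hc : ∫ x in S, u x ≤ ε := by
    have hSmass : ∫ x in S, u x = (∫⁻ x in S, ENNReal.ofReal (u x)).toReal :=
      integral_eq_lintegral_of_nonneg_ae
        (Filter.Eventually.of_forall fun x => (hu_pos x).le)
        hu_cont.aestronglyMeasurable.restrict
    rw [hSmass]
    calc (∫⁻ x in S, ENNReal.ofReal (u x)).toReal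
        ≤ (ENNReal.ofReal ε).toReal := ENNReal.toReal_mono ENNReal.ofReal_ne_top hL
      _ = ε := ENNReal.toReal_ofReal hεpos.le
  refine ⟨?_, ?_, hc⟩
  · -- Part (a)
    intro x hx
    have hxnorm : ‖x‖ ≤ M := by
      rw [hMdef]
      exact norm_le_of_coords x (by positivity) hx
    have hint1 : Integrable fun ξ => heatKernel d σ₁ t (x - ξ) * u₀ ξ :=
      conv_integrand_integrable hu₀_cont hu₀_pos hu₀_int ht0 hσ₁ x
    have hxR : ∀ ξ ∈ Metric.closedBall x r,
        ξ ∈ Metric.closedBall (0 : EuclideanSpace ℝ (Fin d)) R := by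
      intro ξ hξ
      rw [Metric.mem_closedBall] at hξ ⊢
      rw [dist_zero_right]
      calc ‖ξ‖ = ‖(ξ - x) + x‖ := by rw [sub_add_cancel]
        _ ≤ ‖ξ - x‖ + ‖x‖ := norm_add_le _ _
        _ = dist ξ x + ‖x‖ := by rw [dist_eq_norm]
        _ ≤ r + M := add_le_add hξ hxnorm
        _ = R := by rw [hRdef]; ring
    have hstep2 : ∫ ξ in Metric.closedBall x r, heatKernel d σ₁ t (x - ξ) * u₀ z
        ≤ ∫ ξ in Metric.closedBall x r, heatKernel d σ₁ t (x - ξ) * u₀ ξ := by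
      apply setIntegral_mono_on
      · exact ((((heatKernel_continuous d σ₁ t).comp
          (continuous_const.sub continuous_id)).mul continuous_const).continuousOn).integrableOn_compact
          (isCompact_closedBall x r)
      · exact hint1.integrableOn
      · exact measurableSet_closedBall
      · intro ξ hξ
        exact mul_le_mul_of_nonneg_left (hzmin (hxR ξ hξ)) (heatKernel_nonneg ht0 hσ₁ _)
    have hstep3 : ∫ ξ in Metric.closedBall x r, heatKernel d σ₁ t (x - ξ) * u₀ z
        = (∫ y in Metric.closedBall (0 : EuclideanSpace ℝ (Fin d)) r, heatKernel d σ₁ t y)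
          * u₀ z := by
      rw [integral_mul_const]
      congr 1
      have hset : Metric.closedBall x r = {ξ : EuclideanSpace ℝ (Fin d) |
          x - ξ ∈ Metric.closedBall (0 : EuclideanSpace ℝ (Fin d)) r} := by
        ext ξ
        simp [Metric.mem_closedBall, dist_eq_norm, norm_sub_rev]
      rw [hset, setIntegral_sub_left measurableSet_closedBall]
    have hstep4 : (1 : ℝ) / 2
        ≤ ∫ y in Metric.closedBall (0 : EuclideanSpace ℝ (Fin d)) r, heatKernel d σ₁ t y :=
      heatKernel_ball ht0 htT hσ₁ hr0 hrhalf.le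
    have hstep1 : ∫ ξ in Metric.closedBall x r, heatKernel d σ₁ t (x - ξ) * u₀ ξ
        ≤ ∫ ξ, heatKernel d σ₁ t (x - ξ) * u₀ ξ :=
      setIntegral_le_integral hint1 (Filter.Eventually.of_forall fun ξ =>
        mul_nonneg (heatKernel_nonneg ht0 hσ₁ _) (hu₀_pos ξ).le)
    have hu0z : 0 < u₀ z := hu₀_pos z
    have hmain : u₀ z * (1 / 2) ≤ ∫ ξ, heatKernel d σ₁ t (x - ξ) * u₀ ξ := by
      calc u₀ z * (1 / 2) = (1 / 2) * u₀ z := mul_comm _ _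
        _ ≤ (∫ y in Metric.closedBall (0 : EuclideanSpace ℝ (Fin d)) r, heatKernel d σ₁ t y)
            * u₀ z := mul_le_mul_of_nonneg_right hstep4 hu0z.le
        _ = ∫ ξ in Metric.closedBall x r, heatKernel d σ₁ t (x - ξ) * u₀ z := hstep3.symm
        _ ≤ ∫ ξ in Metric.closedBall x r, heatKernel d σ₁ t (x - ξ) * u₀ ξ := hstep2
        _ ≤ ∫ ξ, heatKernel d σ₁ t (x - ξ) * u₀ ξ := hstep1
    calc δ = C₁ * (u₀ z * (1 / 2)) := hδdef
      _ ≤ C₁ * ∫ ξ, heatKernel d σ₁ t (x - ξ) * u₀ ξ :=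
          mul_le_mul_of_nonneg_left hmain hC₁.le
      _ ≤ u x := hlow x
  · -- Part (b)
    intro q hq j
    by_contra habs
    push_neg at habs
    have hmeas_half : MeasurableSet {x : EuclideanSpace ℝ (Fin d) | x j ≤ q j} :=
      (isClosed_le (EuclideanSpace.proj j).continuous continuous_const).measurableSet
    have hsplit := integral_add_compl hmeas_half hu_int
    rw [hu_mass, hq j] at hsplit
    rcases lt_abs.1 habs with h | h
    · have hsub : {x : EuclideanSpace ℝ (Fin d) | x j ≤ q j}ᶜ ⊆ S := by
        intro x hx
        simp only [mem_compl_iff, mem_setOf_eq, not_le] at hx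
        exact ⟨j, le_trans (le_of_lt (lt_trans h hx)) (le_abs_self _)⟩
      have hle : ∫ x in {x : EuclideanSpace ℝ (Fin d) | x j ≤ q j}ᶜ, u x ≤ ∫ x in S, u x :=
        setIntegral_mono_set hu_int.integrableOn
          (Filter.Eventually.of_forall fun x => (hu_pos x).le)
          (HasSubset.Subset.eventuallyLE hsub)
      have := hεlt j
      have hminr : min (α j) (1 - α j) ≤ 1 - α j := min_le_right _ _
      linarith
    · have hsub : {x : EuclideanSpace ℝ (Fin d) | x j ≤ q j} ⊆ S := by
        intro x hx
        simp only [mem_setOf_eq] at hx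
        refine ⟨j, ?_⟩
        have : K < -(x j) := by linarith
        calc K ≤ -(x j) := this.le
          _ ≤ |x j| := neg_le_abs _
      have hle : ∫ x in {x : EuclideanSpace ℝ (Fin d) | x j ≤ q j}, u x ≤ ∫ x in S, u x :=
        setIntegral_mono_set hu_int.integrableOn
          (Filter.Eventually.of_forall fun x => (hu_pos x).le)
          (HasSubset.Subset.eventuallyLE hsub)
      rw [hq j] at hle
      have := hεlt j
      have hminl : min (α j) (1 - α j) ≤ α j := min_le_left _ _
      linarith
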